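/- The largest a > 0 such that the triangle with vertices (0,0), (a,0), (0,a) is contained in the region Ω₀ bounded by the coordinate axes and the curve γ(α) = (2 sin(α/2) − α cos(α/2), 2 sin(α/2) + (2π − α) cos(α/2)), α ∈ [0,2π], equals 4; i.e., the first weight of Ω₀ is w₁ = 4. -/

import Mathlib

open Real

/-- The region Ω₀ bounded by the coordinate axes and the curve
γ(α) = (2sin(α/2) − α cos(α/2), 2sin(α/2) + (2π − α)cos(α/2)): a point of the
first quadrant lies in Ω₀ iff it is (weakly) below some point of the curve. -/
def Omega0 : Set (ℝ × ℝ) :=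
  {z | 0 ≤ z.1 ∧ 0 ≤ z.2 ∧ ∃ α ∈ Set.Icc (0:ℝ) (2*π),
    z.1 ≤ 2 * Real.sin (α/2) - α * Real.cos (α/2) ∧
    z.2 ≤ 2 * Real.sin (α/2) + (2*π - α) * Real.cos (α/2)}

noncomputable def Xf (α : ℝ) : ℝ := 2 * Real.sin (α/2) - α * Real.cos (α/2)
noncomputable def Yf (α : ℝ) : ℝ := 2 * Real.sin (α/2) + (2*π - α) * Real.cos (α/2)

lemma hasDerivAt_half (α : ℝ) : HasDerivAt (fun x : ℝ => x/2) (1/2) α := by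
  simpa using (hasDerivAt_id α).div_const 2

lemma hasDerivAt_Xf (α : ℝ) : HasDerivAt Xf (α/2 * Real.sin (α/2)) α := by
  have hs := (hasDerivAt_half α).sin
  have hc := (hasDerivAt_half α).cos
  have h := (hs.const_mul 2).sub ((hasDerivAt_id α).mul hc)
  refine h.congr_deriv ?_
  simp only [id_eq]
  ring

lemma hasDerivAt_Yf (α : ℝ) :
    HasDerivAt Yf (-((2*π - α)/2 * Real.sin (α/2))) α := by
  have hs := (hasDerivAt_half α).sin
  have hc := (hasDerivAt_half α).cos
  have h := (hs.const_mul 2).add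
    (((hasDerivAt_id α).const_sub (2*π)).mul hc)
  refine h.congr_deriv ?_
  simp only [id_eq]
  ring

lemma Xf_pi : Xf π = 2 := by
  simp [Xf, Real.sin_pi_div_two, Real.cos_pi_div_two]

lemma Yf_pi : Yf π = 2 := by
  simp [Yf, Real.sin_pi_div_two, Real.cos_pi_div_two]

lemma Xf_zero : Xf 0 = 0 := by simp [Xf]

lemma Xf_two_pi : Xf (2*π) = 2*π := by
  have : (2*π)/2 = π := by ring
  simp [Xf, this, Real.sin_pi, Real.cos_pi]

lemma cont_Xf : Continuous Xf := by
  have := fun α => (hasDerivAt_Xf α).continuousAt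
  exact continuous_iff_continuousAt.2 this

lemma cont_Yf : Continuous Yf := by
  have := fun α => (hasDerivAt_Yf α).continuousAt
  exact continuous_iff_continuousAt.2 this

/-- X is strictly monotone on [0, π]. -/
lemma Xf_strictMono : StrictMonoOn Xf (Set.Icc 0 π) := by
  apply strictMonoOn_of_deriv_pos (convex_Icc 0 π) cont_Xf.continuousOn
  intro x hx
  rw [interior_Icc] at hx
  rw [(hasDerivAt_Xf x).deriv]
  have h1 : 0 < x/2 := by linarith [hx.1]
  have h2 : 0 < Real.sin (x/2) := Real.sin_pos_of_pos_of_lt_pi h1 (by linarith [hx.2, Real.pi_pos])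
  positivity

/-- Y is antitone on [0, 2π]. -/
lemma Yf_antitone : AntitoneOn Yf (Set.Icc 0 (2*π)) := by
  apply antitoneOn_of_deriv_nonpos (convex_Icc 0 (2*π)) cont_Yf.continuousOn
  · intro x _
    exact (hasDerivAt_Yf x).differentiableAt.differentiableWithinAt
  · intro x hx
    rw [interior_Icc] at hx
    rw [(hasDerivAt_Yf x).deriv]
    have h2 : 0 ≤ Real.sin (x/2) :=
      Real.sin_nonneg_of_nonneg_of_le_pi (by linarith [hx.1]) (by linarith [hx.2])
    have h3 : 0 ≤ (2*π - x)/2 := by linarith [hx.2]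
    nlinarith

noncomputable def Sf (α : ℝ) : ℝ := Xf α + Yf α

lemma cont_Sf : Continuous Sf := cont_Xf.add cont_Yf

lemma hasDerivAt_Sf (α : ℝ) :
    HasDerivAt Sf ((α - π) * Real.sin (α/2)) α := by
  have h := (hasDerivAt_Xf α).add (hasDerivAt_Yf α)
  refine h.congr_deriv ?_
  ring

lemma Sf_pi : Sf π = 4 := by rw [Sf, Xf_pi, Yf_pi]; norm_num

/-- Key inequality: X(α) + Y(α) ≥ 4 on [0, 2π]. -/
lemma Sf_ge_four {α : ℝ} (hα : α ∈ Set.Icc 0 (2*π)) : 4 ≤ Sf α := by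
  have hπ := Real.pi_pos
  rcases le_total α π with h | h
  · have hanti : AntitoneOn Sf (Set.Icc 0 π) := by
      apply antitoneOn_of_deriv_nonpos (convex_Icc 0 π) cont_Sf.continuousOn
      · intro x _
        exact (hasDerivAt_Sf x).differentiableAt.differentiableWithinAt
      · intro x hx
        rw [interior_Icc] at hx
        rw [(hasDerivAt_Sf x).deriv]
        have h2 : 0 ≤ Real.sin (x/2) :=
          Real.sin_nonneg_of_nonneg_of_le_pi (by linarith [hx.1]) (by linarith [hx.2])
        nlinarith [hx.2]
    have := hanti ⟨hα.1, h⟩ ⟨le_of_lt hπ, le_refl π⟩ h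
    rw [Sf_pi] at this; exact this
  · have hmono : MonotoneOn Sf (Set.Icc π (2*π)) := by
      apply monotoneOn_of_deriv_nonneg (convex_Icc π (2*π)) cont_Sf.continuousOn
      · intro x _
        exact (hasDerivAt_Sf x).differentiableAt.differentiableWithinAt
      · intro x hx
        rw [interior_Icc] at hx
        rw [(hasDerivAt_Sf x).deriv]
        have h2 : 0 ≤ Real.sin (x/2) :=
          Real.sin_nonneg_of_nonneg_of_le_pi (by linarith [hx.1]) (by linarith [hx.2])
        nlinarith [hx.1]
    have := hmono ⟨le_refl π, by linarith⟩ ⟨h, hα.2⟩ h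
    rw [Sf_pi] at this; exact this

lemma four_lt_two_pi : (4:ℝ) < 2*π := by
  have := Real.pi_gt_three
  linarith

theorem stmt16 :
    IsGreatest {a : ℝ | 0 < a ∧
      ∀ z : ℝ × ℝ, 0 ≤ z.1 → 0 ≤ z.2 → z.1 + z.2 ≤ a → z ∈ Omega0} 4 := by
  have hπ := Real.pi_pos
  constructor
  · refine ⟨by norm_num, ?_⟩
    rintro ⟨x, y⟩ hx hy hxy
    refine ⟨hx, hy, ?_⟩
    -- find α with Xf α = x
    have hx2π : x ≤ 2*π := by linarith [four_lt_two_pi]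
    have hIVT : x ∈ Xf '' Set.Icc 0 (2*π) := by
      apply intermediate_value_Icc (by linarith) cont_Xf.continuousOn
      rw [Xf_zero, Xf_two_pi]
      exact ⟨hx, hx2π⟩
    obtain ⟨α, hα, hXα⟩ := hIVT
    refine ⟨α, hα, ?_, ?_⟩
    · show x ≤ Xf α
      rw [hXα]
    · show y ≤ Yf α
      have hS := Sf_ge_four hα
      rw [Sf, hXα] at hS
      linarith
  · rintro a ⟨ha, hmem⟩
    by_contra hlt
    push_neg at hlt
    -- consider the point (2, a - 2)
    obtain ⟨_, _, α, hα, h1, h2⟩ := hmem (2, a - 2) (by norm_num) (by simp; linarith) (by simp)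
    have hX : (2:ℝ) ≤ Xf α := h1
    have hY : a - 2 ≤ Yf α := h2
    -- α ≥ π, since Xf α ≥ 2 = Xf π and Xf strictly increasing on [0, π]
    have hαπ : π ≤ α := by
      by_contra hc
      push_neg at hc
      have : Xf α < Xf π := Xf_strictMono ⟨hα.1, le_of_lt hc⟩
        ⟨le_of_lt hπ, le_refl π⟩ hc
      rw [Xf_pi] at this
      linarith
    have : Yf α ≤ Yf π := Yf_antitone ⟨le_of_lt hπ, by linarith⟩ hα hαπ
    rw [Yf_pi] at this
    linarith
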